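/- For k, m ≥ 2, any generating set of POI_{k×m} contains, for each j ∈ {1,...,k}, at least one element whose image is Ω_n \ I_j; consequently any generating set contains at least k elements of rank m(k−1). -/
import Mathlib


noncomputable section

namespace POIPaper

instance pequivMonoid (α : Type*) : Monoid (α ≃. α) where
  one := PEquiv.refl α
  mul f g := f.trans g
  mul_assoc := PEquiv.trans_assoc
  one_mul := PEquiv.refl_trans
  mul_one := PEquiv.trans_refl

/-- `f` is `P`-stable for the ordered partition of `Ω` given by the block-index map `ι`. -/
def PStable {Ω : Type*} {k : ℕ} (ι : Ω → Fin k) (f : Ω ≃. Ω) : Prop :=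
  ∀ x y : Ω, y ∈ f x →
    (∀ z, ι z = ι x → (f z).isSome) ∧
    (∀ z w, w ∈ f z → ι z = ι x → ι w = ι y) ∧
    (∀ w, ι w = ι y → ∃ z, ι z = ι x ∧ w ∈ f z)

/-- `f` is `P`-order preserving for the ordered partition given by `ι`. -/
def POrdPres {Ω : Type*} {k : ℕ} (ι : Ω → Fin k) (f : Ω ≃. Ω) : Prop :=
  ∀ x y x' y' : Ω, x' ∈ f x → y' ∈ f y → ι x ≤ ι y → ι x' ≤ ι y'

/-- The set `POI(Ω,P)` of all `P`-stable and `P`-order preserving partial permutations. -/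
def POISet {Ω : Type*} {k : ℕ} (ι : Ω → Fin k) : Set (Ω ≃. Ω) :=
  {f | PStable ι f ∧ POrdPres ι f}

/-- Block index map of the uniform interval partition of `{1,...,km}` into `k` blocks of size `m`. -/
def blk (k m : ℕ) (a : Fin (k * m)) : Fin k :=
  ⟨(a : ℕ) / m, by
    have ha := a.isLt
    rcases Nat.eq_zero_or_pos m with h | h
    · subst h; simp at ha
    · rw [Nat.div_lt_iff_lt_mul h]; omega⟩

/-- The monoid `POI_{k×m}` (as a subset of the monoid of partial permutations). -/
def POIkm (k m : ℕ) : Set (Fin (k * m) ≃. Fin (k * m)) := POISet (blk k m)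

/-- The cardinality of the image of a partial permutation. -/
def imCard {n : ℕ} (f : Fin n ≃. Fin n) : ℕ := Set.ncard {b | (f.symm b).isSome}

/-- The `J`-preorder of the monoid `POI_{k×m}`: `α ≤_J β` iff `α ∈ M β M`. -/
def leJ (k m : ℕ) (α β : Fin (k * m) ≃. Fin (k * m)) : Prop :=
  ∃ s ∈ POIkm k m, ∃ t ∈ POIkm k m, α = s * β * t

/-- Order preserving partial permutations of a chain. -/
def OrdPres {n : ℕ} (f : Fin n ≃. Fin n) : Prop :=
  ∀ x y x' y' : Fin n, x' ∈ f x → y' ∈ f y → x ≤ y → x' ≤ y'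

/-- The group of units of `POI_{k×m}`: elements with full domain and image. -/
def unitsSet (k m : ℕ) : Set (Fin (k * m) ≃. Fin (k * m)) :=
  {f | f ∈ POIkm k m ∧ (∀ a, (f a).isSome) ∧ (∀ b, (f.symm b).isSome)}


section Aux

open PEquiv

instance pequivFinite (n : ℕ) : Finite (Fin n ≃. Fin n) :=
  Finite.of_injective (fun f => (f : Fin n → Option (Fin n))) DFunLike.coe_injective

lemma symm_mul_apply {n : ℕ} (P Q : Fin n ≃. Fin n) (b : Fin n) :
    (P * Q).symm b = (Q.symm b).bind P.symm := rfl

lemma isSome_symm_mul {n : ℕ} (P Q : Fin n ≃. Fin n) (b : Fin n) :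
    ((P * Q).symm b).isSome ↔ ∃ c, Q.symm b = some c ∧ (P.symm c).isSome := by
  rw [symm_mul_apply]
  cases h : Q.symm b <;> simp

variable {k m : ℕ}

/-- A designated element of block `t`. -/
def blkElem (k m : ℕ) (hm : 0 < m) (t : Fin k) : Fin (k * m) :=
  ⟨(t : ℕ) * m, Nat.mul_lt_mul_right hm |>.mpr t.isLt⟩

lemma blk_blkElem (hm : 0 < m) (t : Fin k) : blk k m (blkElem k m hm t) = t := by
  apply Fin.ext
  show ((t : ℕ) * m) / m = t
  exact Nat.mul_div_cancel _ hm

lemma im_blockUnion {f : Fin (k * m) ≃. Fin (k * m)} (hf : f ∈ POIkm k m)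
    {b b' : Fin (k * m)} (hb : (f.symm b).isSome) (hbb : blk k m b' = blk k m b) :
    (f.symm b').isSome := by
  obtain ⟨a, ha⟩ := Option.isSome_iff_exists.mp hb
  have hab : b ∈ f a := f.eq_some_iff.mp ha
  obtain ⟨z, _, hzb⟩ := (hf.1 a b hab).2.2 b' hbb
  exact Option.isSome_iff_exists.mpr ⟨z, f.eq_some_iff.mpr hzb⟩

lemma units_struct (hm : 0 < m) {f : Fin (k * m) ≃. Fin (k * m)}
    (hf : f ∈ POIkm k m) (hfull : ∀ b, (f.symm b).isSome) :
    (∀ a, (f a).isSome) ∧ (∀ a b, b ∈ f a → blk k m b = blk k m a) := by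
  classical
  have hbt : ∀ t : Fin k, blk k m (blkElem k m hm t) = t := blk_blkElem hm
  set A : Fin k → Fin (k * m) := fun t => (f.symm (blkElem k m hm t)).get (hfull _) with hA'
  have hA : ∀ t, blkElem k m hm t ∈ f (A t) := fun t =>
    f.eq_some_iff.mp (Option.some_get (hfull _)).symm
  set ψ : Fin k → Fin k := fun t => blk k m (A t) with hψ'
  have key : ∀ x y, y ∈ f x → blk k m x = ψ (blk k m y) := by
    intro x y hxy
    obtain ⟨z, hz, hzb⟩ := (hf.1 x y hxy).2.2 (blkElem k m hm (blk k m y)) (hbt _)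
    have hza : z = A (blk k m y) := f.inj hzb (hA _)
    show blk k m x = blk k m (A (blk k m y))
    rw [← hza, hz]
  have hinj : Function.Injective ψ := by
    intro t t' h
    have h2 := (hf.1 (A t) (blkElem k m hm t) (hA t)).2.1 (A t') (blkElem k m hm t')
      (hA t') h.symm
    rw [hbt, hbt] at h2
    exact h2.symm
  have hmono : Monotone ψ := by
    intro t t' htt
    by_contra hlt
    push_neg at hlt
    have hle : blk k m (A t') ≤ blk k m (A t) := le_of_lt hlt
    have h2 := hf.2 (A t') (A t) (blkElem k m hm t') (blkElem k m hm t) (hA t') (hA t) hle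
    rw [hbt, hbt] at h2
    have heq : t = t' := le_antisymm htt h2
    rw [heq] at hlt
    exact lt_irrefl _ hlt
  have hsm : StrictMono ψ := hmono.strictMono_of_injective hinj
  have hsurj : Function.Surjective ψ := Finite.injective_iff_surjective.mp hinj
  have instW : WellFoundedLT (Fin k) := inferInstance
  obtain ⟨φ, hφ1, hφ2⟩ := Function.bijective_iff_has_inverse.mp ⟨hinj, hsurj⟩
  have hφsm : StrictMono φ := by
    intro a b hab
    rcases lt_trichotomy (φ a) (φ b) with h | h | h
    · exact h
    · exact absurd (by rw [← hφ2 a, ← hφ2 b, h] : a = b) (ne_of_lt hab)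
    · exact absurd (by rw [← hφ2 a, ← hφ2 b]; exact hsm h : b < a) (not_lt.mpr (le_of_lt hab))
  have hψt' : ∀ t, ψ t = t := by
    intro t
    have h1 : t ≤ ψ t := @StrictMono.le_apply (Fin k) _ instW ψ hsm t
    have h2 : t ≤ φ t := @StrictMono.le_apply (Fin k) _ instW φ hφsm t
    have h3 : ψ t ≤ ψ (φ t) := hsm.monotone h2
    rw [hφ2 t] at h3
    exact le_antisymm h3 h1
  have hψt : ∀ t, blk k m (A t) = t := hψt'
  constructor
  · intro a
    exact (hf.1 (A (blk k m a)) (blkElem k m hm (blk k m a)) (hA _)).1 a (hψt (blk k m a)).symm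
  · intro a b hab
    have h := key a b hab
    rw [hψt' (blk k m b)] at h
    exact h.symm

lemma key_list (hm : 0 < m) (j : Fin k)
    (L : List (Fin (k * m) ≃. Fin (k * m))) (hmem : ∀ g ∈ L, g ∈ POIkm k m)
    (him : {b | (L.prod.symm b).isSome} = {b | blk k m b ≠ j}) :
    ∃ g ∈ L, {b | (g.symm b).isSome} = {b | blk k m b ≠ j} := by
  induction L using List.reverseRecOn with
  | nil =>
    exfalso
    have hx : blkElem k m hm j ∈ {b | ((1 : Fin (k * m) ≃. Fin (k * m)).symm b).isSome} := by
      show (((1 : Fin (k * m) ≃. Fin (k * m)).symm) _).isSome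
      rfl
    rw [List.prod_nil] at him
    rw [him] at hx
    exact hx (blk_blkElem hm j)
  | append_singleton L g ih =>
    rw [List.prod_append, List.prod_cons, List.prod_nil, mul_one] at him
    set P := L.prod with hP
    have hg : g ∈ POIkm k m := hmem g (by simp)
    by_cases hfull : ∀ b, (g.symm b).isSome
    · obtain ⟨hdom, hblk⟩ := units_struct hm hg hfull
      have him' : {b | (P.symm b).isSome} = {b | blk k m b ≠ j} := by
        ext c
        simp only [Set.mem_setOf_eq]
        constructor
        · intro hc
          have hb : g c = some ((g c).get (hdom c)) := (Option.some_get (hdom c)).symm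
          set b := (g c).get (hdom c) with hbdef
          have hPg : ((P * g).symm b).isSome :=
            (isSome_symm_mul P g b).mpr ⟨c, g.eq_some_iff.mpr hb, hc⟩
          have hbm : b ∈ {b | ((P * g).symm b).isSome} := hPg
          rw [him] at hbm
          have hbc : blk k m b = blk k m c := hblk c b hb
          rw [Set.mem_setOf_eq, hbc] at hbm
          exact hbm
        · intro hc
          have hb : g c = some ((g c).get (hdom c)) := (Option.some_get (hdom c)).symm
          set b := (g c).get (hdom c) with hbdef
          have hbc : blk k m b = blk k m c := hblk c b hb
          have hbm : b ∈ {b | blk k m b ≠ j} := by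
            rw [Set.mem_setOf_eq, hbc]; exact hc
          rw [← him] at hbm
          rw [Set.mem_setOf_eq, isSome_symm_mul] at hbm
          obtain ⟨c', hc', hPc'⟩ := hbm
          have hceq : c' = c := by
            have h1 : g.symm b = some c := g.eq_some_iff.mpr hb
            rw [h1, Option.some_inj] at hc'
            exact hc'.symm
          rw [hceq] at hPc'
          exact hPc'
      obtain ⟨g', hg', hgim⟩ := ih (fun x hx => hmem x (by simp [hx])) him'
      exact ⟨g', by simp [hg'], hgim⟩
    · push_neg at hfull
      obtain ⟨b₀, hb₀⟩ := hfull
      refine ⟨g, by simp, ?_⟩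
      have sub1 : ∀ b, blk k m b ≠ j → (g.symm b).isSome := by
        intro b hb
        have hbm : b ∈ {b | ((P * g).symm b).isSome} := by rw [him]; exact hb
        rw [Set.mem_setOf_eq, isSome_symm_mul] at hbm
        obtain ⟨c, hc, _⟩ := hbm
        exact Option.isSome_iff_exists.mpr ⟨c, hc⟩
      have hb₀j : blk k m b₀ = j := by
        by_contra h
        exact hb₀ (sub1 b₀ h)
      ext b
      simp only [Set.mem_setOf_eq]
      constructor
      · intro hb hbj
        exact hb₀ (im_blockUnion hg hb (by rw [hb₀j, hbj]))
      · exact sub1 b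

lemma blk_eq_iff (hm : 0 < m) (b : Fin (k * m)) (j : Fin k) :
    blk k m b = j ↔ (j : ℕ) * m ≤ (b : ℕ) ∧ (b : ℕ) < (j : ℕ) * m + m := by
  have hiff : blk k m b = j ↔ (b : ℕ) / m = (j : ℕ) :=
    ⟨fun h => congrArg Fin.val h, fun h => Fin.ext h⟩
  rw [hiff]
  constructor
  · intro h
    obtain ⟨r, hr, hbr⟩ : ∃ r, r < m ∧ (b : ℕ) = (j : ℕ) * m + r := by
      refine ⟨(b : ℕ) % m, Nat.mod_lt _ hm, ?_⟩
      conv_lhs => rw [← Nat.div_add_mod (b : ℕ) m]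
      rw [h, Nat.mul_comm]
    omega
  · intro ⟨h1, h2⟩
    refine Nat.div_eq_of_lt_le h1 ?_
    have h3 : ((j : ℕ) + 1) * m = (j : ℕ) * m + m := Nat.succ_mul _ _
    omega

lemma ncard_blockCompl (hk : 0 < k) (hm : 0 < m) (j : Fin k) :
    Set.ncard {b : Fin (k * m) | blk k m b ≠ j} = m * (k - 1) := by
  classical
  have e : Fin m ≃ {b : Fin (k * m) | blk k m b = j} :=
    { toFun := fun i =>
        ⟨⟨(j : ℕ) * m + (i : ℕ), by
          have h4 : ((j : ℕ) + 1) * m ≤ k * m := Nat.mul_le_mul_right m (by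
            have := j.isLt; omega)
          have h5 : ((j : ℕ) + 1) * m = (j : ℕ) * m + m := Nat.succ_mul _ _
          have := i.isLt
          omega⟩, by
          rw [Set.mem_setOf_eq, blk_eq_iff hm]
          have := i.isLt
          constructor <;> simp⟩
      invFun := fun b => ⟨(b : Fin (k * m)) - (j : ℕ) * m, by
          obtain ⟨b, hb⟩ := b
          rw [Set.mem_setOf_eq, blk_eq_iff hm] at hb
          simp only []
          omega⟩
      left_inv := by
        intro i
        apply Fin.ext
        simp
      right_inv := by
        rintro ⟨b, hb⟩
        rw [Set.mem_setOf_eq, blk_eq_iff hm] at hb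
        apply Subtype.ext
        apply Fin.ext
        simp only []
        omega }
  have hcard : Set.ncard {b : Fin (k * m) | blk k m b = j} = m := by
    rw [← Nat.card_coe_set_eq, ← Nat.card_congr e, Nat.card_eq_fintype_card,
      Fintype.card_fin]
  have hcompl : {b : Fin (k * m) | blk k m b ≠ j} = {b : Fin (k * m) | blk k m b = j}ᶜ := by
    ext b; simp [Set.mem_compl_iff]
  have hsum := Set.ncard_add_ncard_compl {b : Fin (k * m) | blk k m b = j}
  rw [hcard] at hsum
  have hcardall : Nat.card (Fin (k * m)) = k * m := by
    rw [Nat.card_eq_fintype_card, Fintype.card_fin]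
  rw [hcardall] at hsum
  have harith : m * (k - 1) = k * m - m := by
    obtain ⟨k', rfl⟩ : ∃ k', k = k' + 1 := ⟨k - 1, by omega⟩
    simp [Nat.succ_mul, Nat.mul_comm]
  rw [hcompl, harith]
  omega

end Aux

/-- for `k, m ≥ 2`, any generating set of `POI_{k×m}` contains, for each block
index `j`, an element whose image is `Ω_n \ I_j`; hence it contains at least `k` elements
of rank `m(k−1)`. -/
theorem stmt18 (k m : ℕ) (hk : 2 ≤ k) (hm : 2 ≤ m)
    (G : Set (Fin (k * m) ≃. Fin (k * m)))
    (hgen : (Submonoid.closure G : Set (Fin (k * m) ≃. Fin (k * m))) = POIkm k m) :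
    (∀ j : Fin k, ∃ f ∈ G, {b | (f.symm b).isSome} = {b | blk k m b ≠ j}) ∧
    k ≤ Set.ncard {f | f ∈ G ∧ imCard f = m * (k - 1)} := by
  have hk0 : 0 < k := by omega
  have hm0 : 0 < m := by omega
  have hGsub : G ⊆ POIkm k m := by
    rw [← hgen]
    exact Submonoid.subset_closure
  -- the partial identity on the complement of block j
  have part1 : ∀ j : Fin k, ∃ f ∈ G, {b | (f.symm b).isSome} = {b | blk k m b ≠ j} := by
    intro j
    classical
    set β : Fin (k * m) ≃. Fin (k * m) := PEquiv.ofSet {a | blk k m a ≠ j} with hβ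
    have hβmem : ∀ a b : Fin (k * m), b ∈ β a ↔ (b = a ∧ blk k m b ≠ j) := by
      intro a b
      rw [hβ]
      exact PEquiv.mem_ofSet_iff
    have hβPOI : β ∈ POIkm k m := by
      constructor
      · intro x y hxy
        rw [hβmem] at hxy
        obtain ⟨rfl, hx⟩ := hxy
        refine ⟨?_, ?_, ?_⟩
        · intro z hz
          have hz' : β z = some z := by
            rw [hβ]
            exact PEquiv.ofSet_eq_some_self_iff.mpr (by
              show blk k m z ≠ j
              rw [hz]; exact hx)
          rw [hz']
          rfl
        · intro z w hzw hzx
          rw [hβmem] at hzw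
          obtain ⟨rfl, _⟩ := hzw
          exact hzx
        · intro w hw
          refine ⟨w, hw, ?_⟩
          rw [hβmem]
          exact ⟨rfl, by rw [hw]; exact hx⟩
      · intro x y x' y' hx hy hxy
        rw [hβmem] at hx hy
        obtain ⟨rfl, _⟩ := hx
        obtain ⟨rfl, _⟩ := hy
        exact hxy
    have hβcl : β ∈ Submonoid.closure G := by
      rw [SetLike.mem_coe.symm, hgen]
      exact hβPOI
    obtain ⟨L, hL, hLprod⟩ := Submonoid.exists_list_of_mem_closure hβcl
    have hLmem : ∀ g ∈ L, g ∈ POIkm k m := fun g hg => hGsub (hL g hg)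
    have hβim : {b | (β.symm b).isSome} = {b | blk k m b ≠ j} := by
      ext b
      simp only [Set.mem_setOf_eq, hβ, PEquiv.ofSet_symm, Option.isSome_iff_exists,
        PEquiv.ofSet_eq_some_iff]
      constructor
      · rintro ⟨a, rfl, ha⟩
        exact ha
      · intro hb
        exact ⟨b, rfl, hb⟩
    obtain ⟨g, hgL, hgim⟩ := key_list hm0 j L hLmem (by rw [hLprod]; exact hβim)
    exact ⟨g, hL g hgL, hgim⟩
  refine ⟨part1, ?_⟩
  classical
  choose F hFG hFim using part1
  have hFinj : Function.Injective F := by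
    intro j j' h
    by_contra hne
    have h1 : blkElem k m hm0 j ∈ {b | blk k m b ≠ j'} := by
      rw [Set.mem_setOf_eq, blk_blkElem hm0]
      exact hne
    rw [← hFim j'] at h1
    rw [← h, hFim j] at h1
    exact h1 (blk_blkElem hm0 j)
  have hrange : Set.range F ⊆ {f | f ∈ G ∧ imCard f = m * (k - 1)} := by
    rintro _ ⟨j, rfl⟩
    refine ⟨hFG j, ?_⟩
    rw [imCard, hFim j]
    exact ncard_blockCompl hk0 hm0 j
  calc k = (Set.range F).ncard := by
        rw [← Set.image_univ, Set.ncard_image_of_injective _ hFinj, Set.ncard_univ,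
          Nat.card_eq_fintype_card, Fintype.card_fin]
    _ ≤ _ := Set.ncard_le_ncard hrange (Set.toFinite _)


end POIPaper
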